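/- Let n ≥ 1, r_U > 0, and U = B(0, r_U) the open ball in ℝⁿ centered at the origin. Let 𝒱 be a real number with vol_n(U) ≤ 𝒱 < ∞, and let r_𝒱 > 0 be such that vol_n(B(0, r_𝒱)) = 𝒱. Then the infimum of W₂(P_U, P_W) over all measurable sets W ⊆ ℝⁿ with 𝒱 ≤ vol_n(W) < ∞ equals the infimum of W₂(P_U, P_W) over all measurable W ⊆ ℝⁿ with vol_n(W) = 𝒱, and both equal W₂(P_U, P_{B(0, r_𝒱)}), the Wasserstein distance to the uniform measure on the concentric ball of volume 𝒱. -/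

import Mathlib

open MeasureTheory Metric Set
open scoped ENNReal NNReal

noncomputable section

/-- The uniform probability measure on a set `S ⊆ ℝⁿ`: Lebesgue measure restricted to `S`
and normalized. -/
def unif {n : ℕ} (S : Set (EuclideanSpace ℝ (Fin n))) : Measure (EuclideanSpace ℝ (Fin n)) :=
  (volume S)⁻¹ • volume.restrict S

/-- The set of couplings of two measures `μ, ν` on `ℝⁿ`: measures on the product whose
marginals are `μ` and `ν`. -/
def couplings {n : ℕ} (μ ν : Measure (EuclideanSpace ℝ (Fin n))) :
    Set (Measure (EuclideanSpace ℝ (Fin n) × EuclideanSpace ℝ (Fin n))) :=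
  {γ | γ.map Prod.fst = μ ∧ γ.map Prod.snd = ν}

/-- The `L²`-Wasserstein distance between two measures on `ℝⁿ` (valued in `ℝ≥0∞`):
the infimum over all couplings `γ` of `(∫ ‖a − b‖² dγ(a, b))^{1/2}`. -/
def W2 {n : ℕ} (μ ν : Measure (EuclideanSpace ℝ (Fin n))) : ℝ≥0∞ :=
  ⨅ γ ∈ couplings μ ν, (∫⁻ w, edist w.1 w.2 ^ 2 ∂γ) ^ (1 / 2 : ℝ)

namespace W2Aux

variable {n : ℕ}

local notation "E" => EuclideanSpace ℝ (Fin n)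

def f2 (x : EuclideanSpace ℝ (Fin n)) : ℝ≥0∞ := (‖x‖₊ : ℝ≥0∞) ^ 2

lemma meas_f2 : Measurable (f2 (n := n)) :=
  (measurable_nnnorm.coe_nnreal_ennreal).pow_const 2

lemma nn_sq_ineq (d u v : ℝ≥0) (h1 : v ≤ d + u) (h2 : u ≤ d + v) :
    u ^ 2 + v ^ 2 ≤ d ^ 2 + 2 * (u * v) := by
  have h1' := (NNReal.coe_le_coe).2 h1
  have h2' := (NNReal.coe_le_coe).2 h2
  rw [← NNReal.coe_le_coe]
  push_cast at *
  nlinarith [d.coe_nonneg, u.coe_nonneg, v.coe_nonneg]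

lemma nn_sq_bound (d u v : ℝ≥0) (h1 : v ≤ d + u) :
    v ^ 2 ≤ 2 * d ^ 2 + 2 * u ^ 2 := by
  have h1' := (NNReal.coe_le_coe).2 h1
  rw [← NNReal.coe_le_coe]
  push_cast at *
  nlinarith [d.coe_nonneg, u.coe_nonneg, v.coe_nonneg, sq_nonneg ((d:ℝ) - u),
    mul_le_mul h1' h1' v.coe_nonneg (by positivity : (0:ℝ) ≤ ↑d + ↑u)]

lemma marg_fst {μ ν : Measure E} {γ} (hγ : γ ∈ couplings μ ν) {f : EuclideanSpace ℝ (Fin n) → ℝ≥0∞}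
    (hf : Measurable f) : ∫⁻ w, f w.1 ∂γ = ∫⁻ x, f x ∂μ := by
  rw [← hγ.1, lintegral_map hf measurable_fst]

lemma marg_snd {μ ν : Measure E} {γ} (hγ : γ ∈ couplings μ ν) {f : EuclideanSpace ℝ (Fin n) → ℝ≥0∞}
    (hf : Measurable f) : ∫⁻ w, f w.2 ∂γ = ∫⁻ x, f x ∂ν := by
  rw [← hγ.2, lintegral_map hf measurable_snd]
lemma cost_lower {μ ν : Measure E} {γ} (hγ : γ ∈ couplings μ ν)
    (hS : ∫⁻ x, f2 x ∂μ ≠ ⊤) :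
    ((∫⁻ x, f2 x ∂ν) ^ (1 / 2 : ℝ) - (∫⁻ x, f2 x ∂μ) ^ (1 / 2 : ℝ)) ^ 2
      ≤ ∫⁻ w, edist w.1 w.2 ^ 2 ∂γ := by
  set S := ∫⁻ x, f2 x ∂μ with hSdef
  set T := ∫⁻ x, f2 x ∂ν with hTdef
  set I := ∫⁻ w : E × E, edist w.1 w.2 ^ 2 ∂γ with hIdef
  have hu : Measurable fun w : E × E => f2 w.1 := meas_f2.comp measurable_fst
  have hv : Measurable fun w : E × E => f2 w.2 := meas_f2.comp measurable_snd
  have hd : Measurable fun w : E × E => edist w.1 w.2 := measurable_fst.edist measurable_snd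
  have hnf : Measurable fun w : E × E => (‖w.1‖₊ : ℝ≥0∞) :=
    measurable_fst.nnnorm.coe_nnreal_ennreal
  have hns : Measurable fun w : E × E => (‖w.2‖₊ : ℝ≥0∞) :=
    measurable_snd.nnnorm.coe_nnreal_ennreal
  -- triangle inequalities at NNReal level
  have tri1 : ∀ w : E × E, ‖w.2‖₊ ≤ ‖w.1 - w.2‖₊ + ‖w.1‖₊ := by
    intro w
    rw [← NNReal.coe_le_coe]
    push_cast
    have := norm_sub_norm_le w.2 w.1
    rw [norm_sub_rev] at this
    linarith
  have tri2 : ∀ w : E × E, ‖w.1‖₊ ≤ ‖w.1 - w.2‖₊ + ‖w.2‖₊ := by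
    intro w
    rw [← NNReal.coe_le_coe]
    push_cast
    linarith [norm_sub_norm_le w.1 w.2]
  -- pointwise inequality in ℝ≥0∞
  have key_pt : ∀ w : E × E,
      f2 w.1 + f2 w.2 ≤ edist w.1 w.2 ^ 2 + 2 * ((‖w.1‖₊ : ℝ≥0∞) * ‖w.2‖₊) := by
    intro w
    rw [edist_eq_enorm_sub, enorm_eq_nnnorm, f2, f2]
    exact_mod_cast nn_sq_ineq _ _ _ (tri1 w) (tri2 w)
  have key : S + T ≤ I + 2 * ∫⁻ w : E × E, (‖w.1‖₊ : ℝ≥0∞) * ‖w.2‖₊ ∂γ := by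
    have h1 : ∫⁻ w : E × E, (f2 w.1 + f2 w.2) ∂γ = S + T := by
      rw [lintegral_add_left hu, marg_fst hγ meas_f2, marg_snd hγ meas_f2]
    have h2 : ∫⁻ w : E × E, (edist w.1 w.2 ^ 2 + 2 * ((‖w.1‖₊ : ℝ≥0∞) * ‖w.2‖₊)) ∂γ
        = I + 2 * ∫⁻ w : E × E, (‖w.1‖₊ : ℝ≥0∞) * ‖w.2‖₊ ∂γ := by
      rw [lintegral_add_left (hd.pow_const 2), lintegral_const_mul (f := fun w : E × E => (‖w.1‖₊ : ℝ≥0∞) * ‖w.2‖₊) _ (hnf.mul hns)]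
    rw [← h1, ← h2]
    exact lintegral_mono key_pt
  -- Cauchy-Schwarz
  have hCS : ∫⁻ w : E × E, (‖w.1‖₊ : ℝ≥0∞) * ‖w.2‖₊ ∂γ ≤ S ^ (1/2 : ℝ) * T ^ (1/2 : ℝ) := by
    have conj : Real.HolderConjugate 2 2 := Real.HolderConjugate.two_two
    have := ENNReal.lintegral_mul_le_Lp_mul_Lq γ conj hnf.aemeasurable hns.aemeasurable
    simp only [Pi.mul_apply, ENNReal.rpow_two] at this
    have e1 : ∫⁻ w : E × E, (‖w.1‖₊ : ℝ≥0∞) ^ 2 ∂γ = S := marg_fst hγ meas_f2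
    have e2 : ∫⁻ w : E × E, (‖w.2‖₊ : ℝ≥0∞) ^ 2 ∂γ = T := marg_snd hγ meas_f2
    rwa [e1, e2] at this
  have key2 : S + T ≤ I + 2 * (S ^ (1/2 : ℝ) * T ^ (1/2 : ℝ)) := by
    calc S + T ≤ I + 2 * ∫⁻ w : E × E, (‖w.1‖₊ : ℝ≥0∞) * ‖w.2‖₊ ∂γ := key
    _ ≤ I + 2 * (S ^ (1/2 : ℝ) * T ^ (1/2 : ℝ)) := by gcongr
  by_cases hI : I = ⊤
  · rw [hI]; exact le_top
  -- T is finite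
  have hT : T ≠ ⊤ := by
    intro hT
    have pt : ∀ w : E × E, f2 w.2 ≤ 2 * edist w.1 w.2 ^ 2 + 2 * f2 w.1 := by
      intro w
      rw [edist_eq_enorm_sub, enorm_eq_nnnorm, f2, f2]
      exact_mod_cast nn_sq_bound _ _ _ (tri1 w)
    have hTle : T ≤ 2 * I + 2 * S := by
      calc T = ∫⁻ w : E × E, f2 w.2 ∂γ := (marg_snd hγ meas_f2).symm
      _ ≤ ∫⁻ w : E × E, (2 * edist w.1 w.2 ^ 2 + 2 * f2 w.1) ∂γ := lintegral_mono pt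
      _ = 2 * I + 2 * S := by
          rw [lintegral_add_left ((hd.pow_const 2).const_mul 2),
            lintegral_const_mul _ (hd.pow_const 2), lintegral_const_mul _ hu,
            marg_fst hγ meas_f2]
    rw [hT] at hTle
    exact (ENNReal.add_ne_top.2 ⟨ENNReal.mul_ne_top (by simp) hI,
      ENNReal.mul_ne_top (by simp) hS⟩) (top_le_iff.1 hTle)
  set σ := S ^ (1/2 : ℝ) with hσdef
  set τ := T ^ (1/2 : ℝ) with hτdef
  have hσtop : σ ≠ ⊤ := ENNReal.rpow_ne_top_of_nonneg (by norm_num) hS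
  have hτtop : τ ≠ ⊤ := ENNReal.rpow_ne_top_of_nonneg (by norm_num) hT
  have hσ2 : σ ^ 2 = S := by
    rw [hσdef, ← ENNReal.rpow_two, ← ENNReal.rpow_mul]; norm_num
  have hτ2 : τ ^ 2 = T := by
    rw [hτdef, ← ENNReal.rpow_two, ← ENNReal.rpow_mul]; norm_num
  by_cases hts : τ ≤ σ
  · rw [tsub_eq_zero_of_le hts]
    simp
  have hστ : σ ≤ τ := (not_le.1 hts).le
  have hsub : (τ - σ) ^ 2 ≠ ⊤ := by
    exact ENNReal.pow_ne_top (ENNReal.sub_ne_top hτtop)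
  rw [← ENNReal.toReal_le_toReal hsub hI]
  have hkeyR : S.toReal + T.toReal ≤ I.toReal + 2 * (σ.toReal * τ.toReal) := by
    have h2 : I + 2 * (σ * τ) ≠ ⊤ :=
      ENNReal.add_ne_top.2 ⟨hI, ENNReal.mul_ne_top (by simp) (ENNReal.mul_ne_top hσtop hτtop)⟩
    have := (ENNReal.toReal_le_toReal (ENNReal.add_ne_top.2 ⟨hS, hT⟩) h2).2 key2
    rw [ENNReal.toReal_add hS hT, ENNReal.toReal_add hI
      (ENNReal.mul_ne_top (by simp) (ENNReal.mul_ne_top hσtop hτtop)),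
      ENNReal.toReal_mul, ENNReal.toReal_mul] at this
    simpa using this
  have hσR : σ.toReal ^ 2 = S.toReal := by rw [← ENNReal.toReal_pow, hσ2]
  have hτR : τ.toReal ^ 2 = T.toReal := by rw [← ENNReal.toReal_pow, hτ2]
  rw [ENNReal.toReal_pow, ENNReal.toReal_sub_of_le hστ hτtop]
  nlinarith [hkeyR, hσR, hτR]
lemma preimage_smul_ball {r c : ℝ} (hr : 0 < r) (hc : 0 < c) :
    (fun x : EuclideanSpace ℝ (Fin n) => c • x) ⁻¹' ball 0 (c * r) = ball 0 r := by
  ext x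
  simp only [mem_preimage, mem_ball, dist_zero_right, norm_smul, Real.norm_eq_abs,
    abs_of_pos hc]
  exact mul_lt_mul_iff_right₀ hc

lemma unif_ball_map {r c : ℝ} (hr : 0 < r) (hc : 0 < c) :
    (unif (ball (0 : EuclideanSpace ℝ (Fin n)) r)).map (c • ·)
      = unif (ball (0 : EuclideanSpace ℝ (Fin n)) (c * r)) := by
  set k : ℝ≥0∞ := ENNReal.ofReal |(c ^ Module.finrank ℝ (EuclideanSpace ℝ (Fin n)))⁻¹| with hk
  have hk0 : k ≠ 0 := by
    have : (0:ℝ) < |(c ^ Module.finrank ℝ (EuclideanSpace ℝ (Fin n)))⁻¹| := by positivity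
    rw [hk]
    exact (ENNReal.ofReal_pos.2 this).ne'
  have hktop : k ≠ ⊤ := ENNReal.ofReal_ne_top
  have hmapvol : Measure.map (c • ·) (volume : Measure (EuclideanSpace ℝ (Fin n)))
      = k • volume := Measure.map_addHaar_smul volume hc.ne'
  have hpre := preimage_smul_ball (n := n) hr hc
  have hVr : volume (ball (0 : EuclideanSpace ℝ (Fin n)) r)
      = k * volume (ball (0 : EuclideanSpace ℝ (Fin n)) (c * r)) := by
    rw [← hpre, Measure.addHaar_preimage_smul volume hc.ne']
  have hrestr : (volume.restrict (ball (0 : EuclideanSpace ℝ (Fin n)) r)).map (c • ·)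
      = k • volume.restrict (ball (0 : EuclideanSpace ℝ (Fin n)) (c * r)) := by
    rw [← hpre, ← Measure.restrict_map (measurable_const_smul c) measurableSet_ball,
      hmapvol, Measure.restrict_smul]
  have hM0 : volume (ball (0 : EuclideanSpace ℝ (Fin n)) (c * r)) ≠ 0 :=
    (measure_ball_pos volume 0 (by positivity)).ne'
  have hMtop : volume (ball (0 : EuclideanSpace ℝ (Fin n)) (c * r)) ≠ ⊤ :=
    measure_ball_lt_top.ne
  rw [unif, unif, Measure.map_smul, hrestr, hVr, smul_smul]
  congr 1
  rw [ENNReal.mul_inv (Or.inl hk0) (Or.inl hktop)]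
  rw [mul_comm k⁻¹ _, mul_assoc, ENNReal.inv_mul_cancel hk0 hktop, mul_one]

lemma lint_unif_smul {r c : ℝ} (hr : 0 < r) (hc : 0 < c) :
    ∫⁻ x, f2 x ∂(unif (ball (0 : EuclideanSpace ℝ (Fin n)) (c * r)))
      = (ENNReal.ofReal c) ^ 2 * ∫⁻ x, f2 x ∂(unif (ball (0 : EuclideanSpace ℝ (Fin n)) r)) := by
  rw [← unif_ball_map hr hc, lintegral_map meas_f2 (measurable_const_smul c)]
  have hpt : ∀ x : EuclideanSpace ℝ (Fin n),
      f2 (c • x) = (ENNReal.ofReal c) ^ 2 * f2 x := by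
    intro x
    rw [f2, f2, nnnorm_smul, ENNReal.coe_mul, mul_pow]
    congr 2
    rw [Real.nnnorm_of_nonneg hc.le, ENNReal.ofReal, Real.toNNReal_of_nonneg hc.le]
  simp only [hpt]
  rw [lintegral_const_mul _ meas_f2]

lemma s2_ball_fin {r : ℝ} (hr : 0 < r) :
    ∫⁻ x, f2 x ∂(unif (ball (0 : EuclideanSpace ℝ (Fin n)) r)) ≠ ⊤ := by
  have hb : ∫⁻ x in ball (0 : EuclideanSpace ℝ (Fin n)) r, f2 x
      ≤ (ENNReal.ofReal r) ^ 2 * volume (ball (0 : EuclideanSpace ℝ (Fin n)) r) := by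
    rw [← setLIntegral_const]
    refine setLIntegral_mono (by measurability) ?_
    intro x hx
    rw [f2]
    have h1 : ‖x‖₊ ≤ r.toNNReal := by
      rw [← NNReal.coe_le_coe, Real.coe_toNNReal _ hr.le, coe_nnnorm]
      exact (mem_ball_zero_iff.1 hx).le
    have h2 : ((‖x‖₊ : ℝ≥0∞)) ≤ ENNReal.ofReal r := ENNReal.coe_le_coe.2 h1
    gcongr
  rw [unif, lintegral_smul_measure]
  refine ENNReal.mul_ne_top (ENNReal.inv_ne_top.2 (measure_ball_pos volume (0:EuclideanSpace ℝ (Fin n)) hr).ne') ?_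
  exact (lt_of_le_of_lt hb (ENNReal.mul_lt_top (ENNReal.pow_lt_top ENNReal.ofReal_lt_top) measure_ball_lt_top)).ne
lemma f2_le_on_ball {R : ℝ} {x : EuclideanSpace ℝ (Fin n)} (hx : x ∈ ball (0:EuclideanSpace ℝ (Fin n)) R)
    (hR : 0 < R) : f2 x ≤ (ENNReal.ofReal R) ^ 2 := by
  have h1 : ‖x‖₊ ≤ R.toNNReal := by
    rw [← NNReal.coe_le_coe, Real.coe_toNNReal _ hR.le, coe_nnnorm]
    exact (mem_ball_zero_iff.1 hx).le
  have h2 : ((‖x‖₊ : ℝ≥0∞)) ≤ ENNReal.ofReal R := ENNReal.coe_le_coe.2 h1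
  rw [f2]; gcongr

lemma f2_ge_off_ball {R : ℝ} {x : EuclideanSpace ℝ (Fin n)} (hx : x ∉ ball (0:EuclideanSpace ℝ (Fin n)) R)
    (hR : 0 < R) : (ENNReal.ofReal R) ^ 2 ≤ f2 x := by
  have h1 : R.toNNReal ≤ ‖x‖₊ := by
    rw [← NNReal.coe_le_coe, Real.coe_toNNReal _ hR.le, coe_nnnorm]
    simpa [mem_ball_zero_iff, not_lt] using hx
  have h2 : ENNReal.ofReal R ≤ ((‖x‖₊ : ℝ≥0∞)) := ENNReal.coe_le_coe.2 h1
  rw [f2]; gcongr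

lemma bathtub {W : Set (EuclideanSpace ℝ (Fin n))} (hW : MeasurableSet W) {R : ℝ} (hR : 0 < R)
    (hle : volume (ball (0:EuclideanSpace ℝ (Fin n)) R) ≤ volume W) (hfin : volume W ≠ ⊤) :
    ∫⁻ x, f2 x ∂unif (ball (0:EuclideanSpace ℝ (Fin n)) R) ≤ ∫⁻ x, f2 x ∂unif W := by
  set B := ball (0:EuclideanSpace ℝ (Fin n)) R with hB
  set V := volume B with hV
  set M := volume W with hM
  have hV0 : V ≠ 0 := (measure_ball_pos volume 0 hR).ne'
  have hVtop : V ≠ ⊤ := measure_ball_lt_top.ne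
  have hM0 : M ≠ 0 := fun h => hV0 (le_antisymm (h ▸ hle) zero_le)
  rw [unif, unif, lintegral_smul_measure, lintegral_smul_measure, ← hV, ← hM, smul_eq_mul, smul_eq_mul]
  by_cases hIW : ∫⁻ x in W, f2 x = ⊤
  · rw [hIW, ENNReal.mul_top (ENNReal.inv_ne_zero.2 hfin)]
    exact le_top
  have hRR : (ENNReal.ofReal R) ^ 2 ≠ ⊤ := ENNReal.pow_ne_top ENNReal.ofReal_ne_top
  have hIB : ∫⁻ x in B, f2 x ≤ (ENNReal.ofReal R) ^ 2 * V := by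
    rw [← setLIntegral_const]
    exact setLIntegral_mono (by measurability) (fun x hx => f2_le_on_ball hx hR)
  have hIBfin : ∫⁻ x in B, f2 x ≠ ⊤ :=
    (lt_of_le_of_lt hIB (ENNReal.mul_lt_top hRR.lt_top hVtop.lt_top)).ne
  -- main inequality: M * ∫_B ≤ V * ∫_W
  have hsplitB : ∫⁻ x in B, f2 x = (∫⁻ x in B ∩ W, f2 x) + ∫⁻ x in B \ W, f2 x :=
    (lintegral_inter_add_diff _ _ hW).symm
  have hsplitW : ∫⁻ x in W, f2 x = (∫⁻ x in B ∩ W, f2 x) + ∫⁻ x in W \ B, f2 x := by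
    rw [inter_comm]
    exact (lintegral_inter_add_diff _ _ measurableSet_ball).symm
  have hvB : volume (B ∩ W) + volume (B \ W) = V := measure_inter_add_diff B hW
  have hvW : volume (B ∩ W) + volume (W \ B) = M := by
    rw [inter_comm]
    exact measure_inter_add_diff W measurableSet_ball
  have hv1top : volume (B ∩ W) ≠ ⊤ := (lt_of_le_of_lt (measure_mono inter_subset_right) hfin.lt_top).ne
  have hv2top : volume (B \ W) ≠ ⊤ := (lt_of_le_of_lt (measure_mono diff_subset) hVtop.lt_top).ne
  have hv3top : volume (W \ B) ≠ ⊤ := (lt_of_le_of_lt (measure_mono diff_subset) hfin.lt_top).ne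
  have hi1top : ∫⁻ x in B ∩ W, f2 x ≠ ⊤ := by
    rw [hsplitB] at hIBfin; exact (ENNReal.add_ne_top.1 hIBfin).1
  have hi2top : ∫⁻ x in B \ W, f2 x ≠ ⊤ := by
    rw [hsplitB] at hIBfin; exact (ENNReal.add_ne_top.1 hIBfin).2
  have hi3top : ∫⁻ x in W \ B, f2 x ≠ ⊤ := by
    rw [hsplitW] at hIW
    exact fun h => hIW (by rw [h, add_top])
  have e1 : ∫⁻ x in B \ W, f2 x ≤ (ENNReal.ofReal R) ^ 2 * volume (B \ W) := by
    rw [← setLIntegral_const]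
    exact setLIntegral_mono (by measurability) (fun x hx => f2_le_on_ball hx.1 hR)
  have e2 : (ENNReal.ofReal R) ^ 2 * volume (W \ B) ≤ ∫⁻ x in W \ B, f2 x := by
    rw [← setLIntegral_const]
    exact setLIntegral_mono meas_f2 (fun x hx => f2_ge_off_ball hx.2 hR)
  have e3 : ∫⁻ x in B ∩ W, f2 x ≤ (ENNReal.ofReal R) ^ 2 * volume (B ∩ W) := by
    rw [← setLIntegral_const]
    exact setLIntegral_mono (by measurability) (fun x hx => f2_le_on_ball hx.1 hR)
  have hMain : M * ∫⁻ x in B, f2 x ≤ V * ∫⁻ x in W, f2 x := by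
    rw [← ENNReal.toReal_le_toReal (ENNReal.mul_ne_top hfin hIBfin) (ENNReal.mul_ne_top hVtop hIW)]
    rw [ENNReal.toReal_mul, ENNReal.toReal_mul, hsplitB, hsplitW,
      ENNReal.toReal_add hi1top hi2top, ENNReal.toReal_add hi1top hi3top]
    set a := M.toReal
    set b := V.toReal
    set i1 := (∫⁻ x in B ∩ W, f2 x).toReal
    set i2 := (∫⁻ x in B \ W, f2 x).toReal
    set i3 := (∫⁻ x in W \ B, f2 x).toReal
    set v1 := (volume (B ∩ W)).toReal
    set v2 := (volume (B \ W)).toReal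
    set v3 := (volume (W \ B)).toReal
    set RR := ((ENNReal.ofReal R) ^ 2).toReal
    have hab : b ≤ a := ENNReal.toReal_le_toReal hVtop hfin |>.2 hle
    have hvBr : v1 + v2 = b := by
      rw [← ENNReal.toReal_add hv1top hv2top, hvB]
    have hvWr : v1 + v3 = a := by
      rw [← ENNReal.toReal_add hv1top hv3top, hvW]
    have he1 : i2 ≤ RR * v2 := by
      rw [← ENNReal.toReal_mul]
      exact ENNReal.toReal_le_toReal hi2top (ENNReal.mul_ne_top hRR hv2top) |>.2 e1
    have he2 : RR * v3 ≤ i3 := by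
      rw [← ENNReal.toReal_mul]
      exact ENNReal.toReal_le_toReal (ENNReal.mul_ne_top hRR hv3top) hi3top |>.2 e2
    have he3 : i1 ≤ RR * v1 := by
      rw [← ENNReal.toReal_mul]
      exact ENNReal.toReal_le_toReal hi1top (ENNReal.mul_ne_top hRR hv1top) |>.2 e3
    have hnn : 0 ≤ a ∧ 0 ≤ b ∧ 0 ≤ i1 ∧ 0 ≤ i2 ∧ 0 ≤ i3 ∧ 0 ≤ v1 ∧ 0 ≤ v2 ∧ 0 ≤ v3 ∧ 0 ≤ RR :=
      ⟨ENNReal.toReal_nonneg, ENNReal.toReal_nonneg, ENNReal.toReal_nonneg, ENNReal.toReal_nonneg,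
       ENNReal.toReal_nonneg, ENNReal.toReal_nonneg, ENNReal.toReal_nonneg, ENNReal.toReal_nonneg,
       ENNReal.toReal_nonneg⟩
    obtain ⟨ha, hb, hi1, hi2, hi3, hv1, hv2, hv3, hRRn⟩ := hnn
    nlinarith [mul_nonneg (sub_nonneg.2 hab) (sub_nonneg.2 he3),
      mul_nonneg ha (sub_nonneg.2 he1), mul_nonneg hb (sub_nonneg.2 he2)]
  -- conclude
  have cM : M⁻¹ * M = 1 := ENNReal.inv_mul_cancel hM0 hfin
  have cV : V⁻¹ * V = 1 := ENNReal.inv_mul_cancel hV0 hVtop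
  calc V⁻¹ * ∫⁻ x in B, f2 x
      = M⁻¹ * V⁻¹ * (M * ∫⁻ x in B, f2 x) := by
        rw [show M⁻¹ * V⁻¹ * (M * ∫⁻ x in B, f2 x) = (M⁻¹ * M) * (V⁻¹ * ∫⁻ x in B, f2 x) by ring,
          cM, one_mul]
    _ ≤ M⁻¹ * V⁻¹ * (V * ∫⁻ x in W, f2 x) := mul_le_mul_right hMain _
    _ = M⁻¹ * ∫⁻ x in W, f2 x := by
        rw [show M⁻¹ * V⁻¹ * (V * ∫⁻ x in W, f2 x) = (V⁻¹ * V) * (M⁻¹ * ∫⁻ x in W, f2 x) by ring,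
          cV, one_mul]
lemma W2_lower {μ ν : Measure (EuclideanSpace ℝ (Fin n))} (hS : ∫⁻ x, f2 x ∂μ ≠ ⊤) {C : ℝ≥0∞}
    (hC : C ≤ ((∫⁻ x, f2 x ∂ν) ^ (1/2 : ℝ) - (∫⁻ x, f2 x ∂μ) ^ (1/2 : ℝ)) ^ 2) :
    C ^ (1/2 : ℝ) ≤ W2 μ ν := by
  refine le_iInf₂ fun γ hγ => ?_
  exact ENNReal.rpow_le_rpow (hC.trans (cost_lower hγ hS)) (by norm_num)

lemma W2_upper_scale {r c : ℝ} (hr : 0 < r) (hc1 : 1 ≤ c) :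
    W2 (unif (ball (0:EuclideanSpace ℝ (Fin n)) r)) (unif (ball (0:EuclideanSpace ℝ (Fin n)) (c * r)))
      ≤ ((ENNReal.ofReal c - 1) ^ 2 * ∫⁻ x, f2 x ∂unif (ball (0:EuclideanSpace ℝ (Fin n)) r)) ^ (1/2 : ℝ) := by
  have hc : 0 < c := lt_of_lt_of_le one_pos hc1
  set g : EuclideanSpace ℝ (Fin n) → EuclideanSpace ℝ (Fin n) × EuclideanSpace ℝ (Fin n) :=
    fun a => (a, c • a) with hg
  have hmeas : Measurable g := measurable_id.prodMk (measurable_const_smul c)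
  set γ := (unif (ball (0:EuclideanSpace ℝ (Fin n)) r)).map g with hγdef
  have h1 : γ.map Prod.fst = unif (ball (0:EuclideanSpace ℝ (Fin n)) r) := by
    rw [hγdef, Measure.map_map measurable_fst hmeas]
    exact Measure.map_id
  have h2 : γ.map Prod.snd = unif (ball (0:EuclideanSpace ℝ (Fin n)) (c * r)) := by
    rw [hγdef, Measure.map_map measurable_snd hmeas]
    exact unif_ball_map hr hc
  have hcost : ∫⁻ w : EuclideanSpace ℝ (Fin n) × EuclideanSpace ℝ (Fin n), edist w.1 w.2 ^ 2 ∂γ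
      = (ENNReal.ofReal c - 1) ^ 2 * ∫⁻ x, f2 x ∂unif (ball (0:EuclideanSpace ℝ (Fin n)) r) := by
    rw [hγdef, lintegral_map ((measurable_fst.edist measurable_snd).pow_const 2) hmeas]
    have hpt : ∀ a : EuclideanSpace ℝ (Fin n),
        edist (g a).1 (g a).2 ^ 2 = (ENNReal.ofReal c - 1) ^ 2 * f2 a := by
      intro a
      have hg1 : (g a).1 = a := rfl
      have hg2 : (g a).2 = c • a := rfl
      rw [hg1, hg2, edist_eq_enorm_sub, enorm_eq_nnnorm, f2]
      have h3 : a - c • a = (1 - c) • a := by rw [sub_smul, one_smul]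
      rw [h3, nnnorm_smul, ENNReal.coe_mul, mul_pow]
      congr 2
      have h4 : ‖(1 - c : ℝ)‖₊ = (c - 1).toNNReal := by
        rw [← nnnorm_neg, neg_sub]
        exact (Real.toNNReal_eq_nnnorm_of_nonneg (by linarith)).symm
      rw [h4, show ((c - 1).toNNReal : ℝ≥0∞) = ENNReal.ofReal (c - 1) from rfl,
        ENNReal.ofReal_sub c zero_le_one, ENNReal.ofReal_one]
    simp only [hpt]
    rw [lintegral_const_mul _ meas_f2]
  refine le_trans (iInf₂_le γ ⟨h1, h2⟩) ?_
  rw [hcost]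
end W2Aux

open W2Aux

/-- **A concentric ball minimizes the Wasserstein distance to a ball among all sets of
at least (or exactly) a given volume.** Let `U = B(0, r_U)`, `vol(U) ≤ 𝒱 < ∞`, and let
`r_𝒱 > 0` satisfy `vol(B(0, r_𝒱)) = 𝒱`. Then the infimum of `W₂(P_U, P_W)` over
measurable `W` with `𝒱 ≤ vol(W) < ∞` equals the infimum over measurable `W` with
`vol(W) = 𝒱`, and both equal `W₂(P_U, P_{B(0, r_𝒱)})`. -/
theorem inf_W2_over_sets_of_volume (n : ℕ) (hn : 1 ≤ n) (rU : ℝ) (hrU : 0 < rU)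
    (𝒱 : ℝ) (h𝒱 : (volume (ball (0 : EuclideanSpace ℝ (Fin n)) rU)).toReal ≤ 𝒱)
    (rV : ℝ) (hrV : 0 < rV)
    (hrV𝒱 : volume (ball (0 : EuclideanSpace ℝ (Fin n)) rV) = ENNReal.ofReal 𝒱) :
    (⨅ W ∈ {W : Set (EuclideanSpace ℝ (Fin n)) |
        MeasurableSet W ∧ ENNReal.ofReal 𝒱 ≤ volume W ∧ volume W ≠ ⊤},
      W2 (unif (ball (0 : EuclideanSpace ℝ (Fin n)) rU)) (unif W)) =
      W2 (unif (ball (0 : EuclideanSpace ℝ (Fin n)) rU))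
        (unif (ball (0 : EuclideanSpace ℝ (Fin n)) rV)) ∧
    (⨅ W ∈ {W : Set (EuclideanSpace ℝ (Fin n)) |
        MeasurableSet W ∧ volume W = ENNReal.ofReal 𝒱},
      W2 (unif (ball (0 : EuclideanSpace ℝ (Fin n)) rU)) (unif W)) =
      W2 (unif (ball (0 : EuclideanSpace ℝ (Fin n)) rU))
        (unif (ball (0 : EuclideanSpace ℝ (Fin n)) rV)) := by
  haveI : Nontrivial (EuclideanSpace ℝ (Fin n)) := by
    refine ⟨⟨EuclideanSpace.single (⟨0, hn⟩ : Fin n) (1:ℝ), 0, fun h => ?_⟩⟩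
    have := congrArg (fun v : EuclideanSpace ℝ (Fin n) => v ⟨0, hn⟩) h
    simp [EuclideanSpace.single_apply] at this
  set BU := ball (0 : EuclideanSpace ℝ (Fin n)) rU with hBU
  set BV := ball (0 : EuclideanSpace ℝ (Fin n)) rV with hBV
  -- rU ≤ rV
  have hUleV : volume BU ≤ volume BV := by
    calc volume BU = ENNReal.ofReal (volume BU).toReal :=
          (ENNReal.ofReal_toReal measure_ball_lt_top.ne).symm
    _ ≤ ENNReal.ofReal 𝒱 := ENNReal.ofReal_le_ofReal h𝒱
    _ = volume BV := hrV𝒱.symm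
  have hrUrV : rU ≤ rV := by
    rw [hBU, hBV, Measure.addHaar_ball _ _ hrU.le, Measure.addHaar_ball _ _ hrV.le] at hUleV
    have hK0 : volume (ball (0 : EuclideanSpace ℝ (Fin n)) 1) ≠ 0 :=
      (measure_ball_pos volume 0 one_pos).ne'
    have hKtop : volume (ball (0 : EuclideanSpace ℝ (Fin n)) 1) ≠ ⊤ := measure_ball_lt_top.ne
    rw [ENNReal.mul_le_mul_iff_left hK0 hKtop,
      ENNReal.ofReal_le_ofReal_iff (by positivity)] at hUleV
    have hd : Module.finrank ℝ (EuclideanSpace ℝ (Fin n)) = n := finrank_euclideanSpace_fin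
    rw [hd] at hUleV
    exact (pow_le_pow_iff_left₀ hrU.le hrV.le (by omega)).1 hUleV
  set c : ℝ := rV / rU with hcdef
  have hc : 0 < c := div_pos hrV hrU
  have hc1 : 1 ≤ c := (one_le_div hrU).2 hrUrV
  have hcr : c * rU = rV := div_mul_cancel₀ rV hrU.ne'
  set S := ∫⁻ x, f2 x ∂unif BU with hSdef
  have hSfin : S ≠ ⊤ := s2_ball_fin hrU
  have hTV : ∫⁻ x, f2 x ∂unif BV = (ENNReal.ofReal c) ^ 2 * S := by
    rw [hBV, ← hcr]
    exact lint_unif_smul hrU hc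
  set σ := S ^ (1/2 : ℝ) with hσdef
  have hσtop : σ ≠ ⊤ := ENNReal.rpow_ne_top_of_nonneg (by norm_num) hSfin
  have hσ2 : σ ^ 2 = S := by
    rw [hσdef, ← ENNReal.rpow_natCast (S ^ (1/2:ℝ)) 2, ← ENNReal.rpow_mul]; norm_num
  have hτ : (∫⁻ x, f2 x ∂unif BV) ^ (1/2 : ℝ) = ENNReal.ofReal c * σ := by
    rw [hTV, ENNReal.mul_rpow_of_nonneg _ _ (by norm_num : (0:ℝ) ≤ 1/2)]
    congr 1
    rw [← ENNReal.rpow_natCast (ENNReal.ofReal c) 2, ← ENNReal.rpow_mul]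
    norm_num
  set C := (ENNReal.ofReal c - 1) ^ 2 * S with hCdef
  have hCeq : ((∫⁻ x, f2 x ∂unif BV) ^ (1/2 : ℝ) - σ) ^ 2 = C := by
    rw [hτ, hCdef]
    have hsm : (ENNReal.ofReal c - 1) * σ = ENNReal.ofReal c * σ - 1 * σ :=
      ENNReal.sub_mul (fun _ _ => hσtop)
    rw [one_mul] at hsm
    rw [← hsm, mul_pow, hσ2]
  -- W2 between the two balls equals C ^ (1/2)
  have hW2eq : W2 (unif BU) (unif BV) = C ^ (1/2 : ℝ) := by
    refine le_antisymm ?_ ?_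
    · have := W2_upper_scale (n := n) hrU hc1
      rw [hcr] at this
      exact this
    · exact W2_lower hSfin hCeq.ge
  -- lower bound for any admissible W
  have hlow : ∀ W : Set (EuclideanSpace ℝ (Fin n)), MeasurableSet W →
      ENNReal.ofReal 𝒱 ≤ volume W → volume W ≠ ⊤ →
      C ^ (1/2 : ℝ) ≤ W2 (unif BU) (unif W) := by
    intro W hWm hWv hWfin
    have htb : ∫⁻ x, f2 x ∂unif BV ≤ ∫⁻ x, f2 x ∂unif W :=
      bathtub hWm hrV (by rw [← hBV, hrV𝒱]; exact hWv) hWfin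
    refine W2_lower hSfin ?_
    rw [← hCeq]
    gcongr
  have hmemV1 : BV ∈ {W : Set (EuclideanSpace ℝ (Fin n)) |
      MeasurableSet W ∧ ENNReal.ofReal 𝒱 ≤ volume W ∧ volume W ≠ ⊤} :=
    ⟨measurableSet_ball, hrV𝒱.ge, by rw [hrV𝒱]; exact ENNReal.ofReal_ne_top⟩
  have hmemV2 : BV ∈ {W : Set (EuclideanSpace ℝ (Fin n)) |
      MeasurableSet W ∧ volume W = ENNReal.ofReal 𝒱} := ⟨measurableSet_ball, hrV𝒱⟩
  constructor
  · refine le_antisymm (iInf₂_le BV hmemV1) ?_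
    rw [hW2eq]
    exact le_iInf₂ fun W hW => hlow W hW.1 hW.2.1 hW.2.2
  · refine le_antisymm (iInf₂_le BV hmemV2) ?_
    rw [hW2eq]
    exact le_iInf₂ fun W hW => hlow W hW.1 hW.2.ge (by rw [hW.2]; exact ENNReal.ofReal_ne_top)


end
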